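/- Let r ≥ 3 and let A = V_2^{(r)} be the configuration with columns (r,0)ᵀ, (r−1,1)ᵀ, (r−2,2)ᵀ, …, (0,r)ᵀ, indexing the variable x_k by the column (r−k+1, k−1)ᵀ for k = 1,…,r+1. Then the binomial f = x_1x_4 − x_2x_3 belongs to the toric ideal I_A, f is not a circuit of I_A, and f is indispensable: the only binomials g ∈ I_A of the form x_1x_4 − m (m a monomial) satisfy g = f, so f is not generated by the other binomials of I_A and hence f (or −f) belongs to every binomial generating set of I_A. -/

import Mathlib

open MvPolynomial

/-- The binomial `X^u - X^v`. -/
noncomputable def binom {σ : Type*} (K : Type*) [Field K] (u v : σ →₀ ℕ) :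
    MvPolynomial σ K :=
  MvPolynomial.monomial u 1 - MvPolynomial.monomial v 1

/-- A binomial `X^u - X^v` with `u ≠ v`. -/
def IsBinomial {σ K : Type*} [Field K] (f : MvPolynomial σ K) : Prop :=
  ∃ u v : σ →₀ ℕ, u ≠ v ∧ f = binom K u v

/-- An exponent vector is squarefree if every entry is at most one. -/
def SqfreeExp {σ : Type*} (u : σ →₀ ℕ) : Prop := ∀ i, u i ≤ 1

/-- `f` is a circuit of the ideal `I`: an irreducible binomial in `I` such that no
binomial of `I` has support (set of variables) properly contained in that of `f`. -/
def IsCircuit {σ K : Type*} [Field K] (I : Ideal (MvPolynomial σ K))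
    (f : MvPolynomial σ K) : Prop :=
  IsBinomial f ∧ f ∈ I ∧ Irreducible f ∧
    ∀ g ∈ I, IsBinomial g → ¬ (g.vars ⊂ f.vars)

/-- The set `C_A` of circuits of `I`. -/
def Circuits {σ : Type*} (K : Type*) [Field K] (I : Ideal (MvPolynomial σ K)) :
    Set (MvPolynomial σ K) :=
  {f | IsCircuit I f}

/-- The set `C_A^sf` of circuits of `I` having at least one squarefree monomial. -/
def CircuitsSF {σ : Type*} (K : Type*) [Field K] (I : Ideal (MvPolynomial σ K)) :
    Set (MvPolynomial σ K) :=
  {f | IsCircuit I f ∧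
    ∃ u v : σ →₀ ℕ, u ≠ v ∧ f = binom K u v ∧ (SqfreeExp u ∨ SqfreeExp v)}

/-- The set `C_A^{sf,sf}` of circuits of `I` both of whose monomials are squarefree. -/
def CircuitsSFSF {σ : Type*} (K : Type*) [Field K] (I : Ideal (MvPolynomial σ K)) :
    Set (MvPolynomial σ K) :=
  {f | IsCircuit I f ∧
    ∃ u v : σ →₀ ℕ, u ≠ v ∧ f = binom K u v ∧ (SqfreeExp u ∧ SqfreeExp v)}

/-- The monomial map `x_j ↦ t^{a_j}` into the Laurent polynomial ring
`K[t_1^{±1},…,t_d^{±1}] = K[ℤ^d]`, where `a_j` is the `j`-th column of `A`. -/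
noncomputable def toricMap (K : Type*) [Field K] {d : ℕ} {ι : Type*}
    (A : Matrix (Fin d) ι ℤ) :
    MvPolynomial ι K →ₐ[K] AddMonoidAlgebra K (Fin d → ℤ) :=
  MvPolynomial.aeval fun j => AddMonoidAlgebra.single (fun i => A i j) (1 : K)

/-- The toric ideal `I_A` of the configuration `A`. -/
noncomputable def toricIdeal (K : Type*) [Field K] {d : ℕ} {ι : Type*}
    (A : Matrix (Fin d) ι ℤ) : Ideal (MvPolynomial ι K) :=
  RingHom.ker (toricMap K A).toRingHom

/-- `A` is a configuration: its columns are pairwise distinct and lie on a common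
affine hyperplane not passing through the origin. -/
structure IsConfiguration {d : ℕ} {ι : Type*} (A : Matrix (Fin d) ι ℤ) : Prop where
  injective : Function.Injective fun j i => A i j
  hyperplane : ∃ w : Fin d → ℚ, ∀ j, (∑ i, w i * (A i j : ℚ)) = 1

/-- The configuration `V_2^{(r)}`, with `k`-th column `(r - k, k)ᵀ` for `k = 0, …, r`. -/
def V2config (r : ℕ) : Matrix (Fin 2) (Fin (r + 1)) ℤ :=
  fun i k => if i = 0 then (r : ℤ) - (k : ℤ) else (k : ℤ)

section Aux
variable {K : Type*} [Field K]

lemma toricMap_monomial {d : ℕ} {ι : Type*} [Fintype ι] (A : Matrix (Fin d) ι ℤ)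
    (u : ι →₀ ℕ) :
    toricMap K A (MvPolynomial.monomial u 1) =
      AddMonoidAlgebra.single (fun i => ∑ j, (u j : ℤ) * A i j) (1 : K) := by
  rw [toricMap, MvPolynomial.aeval_monomial, map_one, one_mul]
  rw [Finsupp.prod]
  simp_rw [AddMonoidAlgebra.single_pow, one_pow]
  rw [AddMonoidAlgebra.prod_single, Finset.prod_const_one]
  congr 1
  funext i
  rw [Finset.sum_apply]
  rw [Finset.sum_subset (Finset.subset_univ u.support)]
  · simp [Pi.smul_apply, mul_comm]
  · intro j _ hj
    simp [Finsupp.notMem_support_iff.mp hj]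

end Aux

section Aux2
variable {K : Type*} [Field K] {r : ℕ}

/-- total degree of an exponent vector -/
def wtE {r : ℕ} (u : Fin (r + 1) →₀ ℕ) : ℕ := ∑ j, u j
/-- weighted degree -/
def dgE {r : ℕ} (u : Fin (r + 1) →₀ ℕ) : ℕ := ∑ j, u j * (j : ℕ)

lemma sum0_eq (w : Fin (r+1) →₀ ℕ) :
    ∑ j, (w j : ℤ) * ((r : ℤ) - (j : ℤ)) = (r : ℤ) * wtE w - dgE w := by
  unfold wtE dgE; push_cast
  rw [Finset.mul_sum, ← Finset.sum_sub_distrib]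
  congr 1; funext j; ring

lemma sum1_eq (w : Fin (r+1) →₀ ℕ) :
    ∑ j, (w j : ℤ) * (j : ℤ) = (dgE w : ℤ) := by
  unfold dgE; push_cast; rfl

lemma binom_mem_iff (hr : 0 < r) (u v : Fin (r + 1) →₀ ℕ) :
    binom K u v ∈ toricIdeal K (V2config r) ↔ (wtE u = wtE v ∧ dgE u = dgE v) := by
  rw [toricIdeal, RingHom.mem_ker, binom, map_sub, sub_eq_zero]
  have : ∀ w : Fin (r+1) →₀ ℕ, (toricMap K (V2config r)).toRingHom (MvPolynomial.monomial w 1)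
      = AddMonoidAlgebra.single (fun i : Fin 2 => ∑ j, (w j : ℤ) * V2config r i j) (1 : K) :=
    fun w => toricMap_monomial (V2config r) w
  rw [this u, this v, AddMonoidAlgebra.single_left_inj (one_ne_zero)]
  constructor
  · intro h
    have h0 := congrFun h 0
    have h1 := congrFun h 1
    simp only [V2config, if_pos rfl, if_true] at h0
    simp only [V2config, show (1 : Fin 2) ≠ 0 by decide, if_false] at h1
    rw [sum1_eq, sum1_eq] at h1
    have hd : dgE u = dgE v := by exact_mod_cast h1
    refine ⟨?_, hd⟩
    rw [sum0_eq, sum0_eq] at h0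
    have : (r : ℤ) * wtE u = (r : ℤ) * wtE v := by omega
    have := mul_left_cancel₀ (a := (r : ℤ)) (by exact_mod_cast hr.ne') this
    exact_mod_cast this
  · rintro ⟨hw, hd⟩
    funext i
    fin_cases i
    · simp only [V2config, if_pos rfl, if_true] ; rw [show ((⟨0, by omega⟩ : Fin 2) : Fin 2) = 0 from rfl]
      simp only [if_pos rfl, if_true]
      rw [sum0_eq, sum0_eq, hw, hd]
    · simp only [V2config]
      rw [show ((⟨1, by omega⟩ : Fin 2) : Fin 2) = 1 from rfl]
      simp only [show (1 : Fin 2) ≠ 0 by decide, if_false]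
      rw [sum1_eq, sum1_eq, hd]

end Aux2

section Aux3
variable {r : ℕ}

lemma wtE_add (x y : Fin (r+1) →₀ ℕ) : wtE (x + y) = wtE x + wtE y := by
  simp [wtE, Finsupp.add_apply, Finset.sum_add_distrib]

lemma dgE_add (x y : Fin (r+1) →₀ ℕ) : dgE (x + y) = dgE x + dgE y := by
  simp [dgE, Finsupp.add_apply, add_mul, Finset.sum_add_distrib]

lemma wtE_single (a : Fin (r+1)) (n : ℕ) : wtE (Finsupp.single a n) = n := by
  simp [wtE, Finsupp.single_apply]

lemma dgE_single (a : Fin (r+1)) (n : ℕ) : dgE (Finsupp.single a n) = n * a := by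
  simp [dgE, Finsupp.single_apply, ite_mul]

lemma wt0 (v : Fin (r+1) →₀ ℕ) (h : wtE v = 0) : v = 0 := by
  have := (Finset.sum_eq_zero_iff (s := Finset.univ) (f := fun j => v j)).mp h
  ext j; exact this j (Finset.mem_univ j)

lemma wt1 (v : Fin (r+1) →₀ ℕ) (h : wtE v = 1) :
    ∃ j : Fin (r+1), v j = 1 ∧ (∀ k, k ≠ j → v k = 0) ∧ dgE v = (j : ℕ) := by
  have hne : ∃ j, v j ≠ 0 := by
    by_contra hall
    push_neg at hall
    have : v = 0 := by ext j; exact hall j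
    rw [this] at h
    simp [wtE] at h
  obtain ⟨j, hj⟩ := hne
  have hle : v j ≤ 1 := by
    calc v j ≤ ∑ k, v k := Finset.single_le_sum (fun k _ => Nat.zero_le _) (Finset.mem_univ j)
    _ = 1 := h
  have hvj : v j = 1 := by omega
  have hzero : ∀ k, k ≠ j → v k = 0 := by
    intro k hk
    have hpair : v j + v k ≤ wtE v := by
      rw [wtE, ← Finset.sum_pair (Ne.symm hk)]
      exact Finset.sum_le_sum_of_subset (Finset.subset_univ _)
    rw [h] at hpair
    omega
  refine ⟨j, hvj, hzero, ?_⟩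
  rw [dgE, Finset.sum_eq_single j]
  · rw [hvj, one_mul]
  · intro k _ hk; rw [hzero k hk, zero_mul]
  · intro hj'; exact absurd (Finset.mem_univ j) hj'

lemma key2 (hr : 3 ≤ r) (w : Fin (r+1) →₀ ℕ) (h2 : wtE w = 2) (h3 : dgE w = 3) :
    w = Finsupp.single ⟨0, by omega⟩ 1 + Finsupp.single ⟨3, by omega⟩ 1 ∨
    w = Finsupp.single ⟨1, by omega⟩ 1 + Finsupp.single ⟨2, by omega⟩ 1 := by
  have h01 : 0 < r + 1 := by omega
  have h11 : 1 < r + 1 := by omega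
  have h21 : 2 < r + 1 := by omega
  have h31 : 3 < r + 1 := by omega
  set j0 : Fin (r+1) := ⟨0, h01⟩ with hj0
  set j1 : Fin (r+1) := ⟨1, h11⟩ with hj1
  set j2 : Fin (r+1) := ⟨2, h21⟩ with hj2
  set j3 : Fin (r+1) := ⟨3, h31⟩ with hj3
  have v0 : (j0 : ℕ) = 0 := rfl
  have v1 : (j1 : ℕ) = 1 := rfl
  have v2 : (j2 : ℕ) = 2 := rfl
  have v3 : (j3 : ℕ) = 3 := rfl
  have d01 : j0 ≠ j1 := Fin.ne_of_val_ne (by omega)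
  have d02 : j0 ≠ j2 := Fin.ne_of_val_ne (by omega)
  have d03 : j0 ≠ j3 := Fin.ne_of_val_ne (by omega)
  have d12 : j1 ≠ j2 := Fin.ne_of_val_ne (by omega)
  have d13 : j1 ≠ j3 := Fin.ne_of_val_ne (by omega)
  have d23 : j2 ≠ j3 := Fin.ne_of_val_ne (by omega)
  have hclass : ∀ j : Fin (r+1), (j : ℕ) < 4 → j = j0 ∨ j = j1 ∨ j = j2 ∨ j = j3 := by
    intro j hj
    have : (j : ℕ) = 0 ∨ (j : ℕ) = 1 ∨ (j : ℕ) = 2 ∨ (j : ℕ) = 3 := by omega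
    rcases this with h | h | h | h
    · exact Or.inl (Fin.ext (by omega))
    · exact Or.inr (Or.inl (Fin.ext (by omega)))
    · exact Or.inr (Or.inr (Or.inl (Fin.ext (by omega))))
    · exact Or.inr (Or.inr (Or.inr (Fin.ext (by omega))))
  have h4 : ∀ j : Fin (r+1), 4 ≤ (j : ℕ) → w j = 0 := by
    intro j hj
    by_contra hne
    have h1 : 1 ≤ w j := Nat.one_le_iff_ne_zero.mpr hne
    have hle : w j * (j : ℕ) ≤ dgE w :=
      Finset.single_le_sum (f := fun k => w k * (k : ℕ)) (fun k _ => Nat.zero_le _)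
        (Finset.mem_univ j)
    have h4' : 4 ≤ w j * (j : ℕ) := le_trans (by omega) (Nat.mul_le_mul h1 le_rfl)
    omega
  have hmem4 : ∀ j : Fin (r+1), j ∉ ({j0, j1, j2, j3} : Finset (Fin (r+1))) → 4 ≤ (j : ℕ) := by
    intro j hj
    by_contra hlt
    push_neg at hlt
    rcases hclass j hlt with h | h | h | h <;>
      simp [h, Finset.mem_insert] at hj
  have hsum : ∀ f : Fin (r+1) → ℕ, (∀ j : Fin (r+1), 4 ≤ (j : ℕ) → f j = 0) →
      ∑ j, f j = f j0 + f j1 + f j2 + f j3 := by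
    intro f hf
    rw [← Finset.sum_subset (Finset.subset_univ ({j0, j1, j2, j3} : Finset (Fin (r+1))))
      (fun j _ hj => hf j (hmem4 j hj))]
    rw [Finset.sum_insert (by simp [Finset.mem_insert, d01, d02, d03]),
      Finset.sum_insert (by simp [Finset.mem_insert, d12, d13]),
      Finset.sum_insert (by simp [d23]), Finset.sum_singleton]
    ring
  have hw2 : w j0 + w j1 + w j2 + w j3 = 2 := by
    rw [← hsum (fun j => w j) h4]; exact h2
  have hw3 : w j0 * 0 + w j1 * 1 + w j2 * 2 + w j3 * 3 = 3 := by
    have := hsum (fun j => w j * (j : ℕ))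
      (fun j hj => by show w j * (j : ℕ) = 0; rw [h4 j hj, zero_mul])
    rw [dgE, this] at h3
    simp only [v0, v1, v2, v3] at h3
    omega
  have hcase : (w j0 = 1 ∧ w j1 = 0 ∧ w j2 = 0 ∧ w j3 = 1) ∨
      (w j0 = 0 ∧ w j1 = 1 ∧ w j2 = 1 ∧ w j3 = 0) := by omega
  have happly : ∀ (a b j : Fin (r+1)),
      (Finsupp.single a 1 + Finsupp.single b 1 : Fin (r+1) →₀ ℕ) j =
        (if a = j then 1 else 0) + (if b = j then 1 else 0) := by
    intro a b j
    rw [Finsupp.add_apply, Finsupp.single_apply, Finsupp.single_apply]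
  have hext : ∀ j : Fin (r+1), j ≠ j0 → j ≠ j1 → j ≠ j2 → j ≠ j3 → w j = 0 := by
    intro j e0 e1 e2 e3
    apply h4
    by_contra hlt
    push_neg at hlt
    rcases hclass j hlt with h | h | h | h <;> [exact e0 h; exact e1 h; exact e2 h; exact e3 h]
  rcases hcase with ⟨a0, a1, a2, a3⟩ | ⟨a0, a1, a2, a3⟩
  · left
    ext j
    rw [happly]
    by_cases e0 : j = j0
    · subst e0; rw [if_pos rfl, if_neg (Ne.symm d03), a0]
    by_cases e3 : j = j3
    · subst e3; rw [if_neg d03, if_pos rfl, a3]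
    by_cases e1 : j = j1
    · subst e1; rw [if_neg d01, if_neg (Ne.symm d13), a1]
    by_cases e2 : j = j2
    · subst e2; rw [if_neg d02, if_neg (Ne.symm d23), a2]
    rw [if_neg (fun h => e0 h.symm), if_neg (fun h => e3 h.symm), hext j e0 e1 e2 e3]
  · right
    ext j
    rw [happly]
    by_cases e1 : j = j1
    · subst e1; rw [if_pos rfl, if_neg (Ne.symm d12), a1]
    by_cases e2 : j = j2
    · subst e2; rw [if_neg d12, if_pos rfl, a2]
    by_cases e0 : j = j0
    · subst e0; rw [if_neg (Ne.symm d01), if_neg (Ne.symm d02), a0]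
    by_cases e3 : j = j3
    · subst e3; rw [if_neg d13, if_neg d23, a3]
    rw [if_neg (fun h => e1 h.symm), if_neg (fun h => e2 h.symm), hext j e0 e1 e2 e3]

end Aux3

section Aux4
variable {K : Type*} [Field K] {σ : Type*} [DecidableEq σ]

lemma coeff_binom (u v c : σ →₀ ℕ) :
    MvPolynomial.coeff c (binom K u v) =
      (if u = c then (1:K) else 0) - (if v = c then 1 else 0) := by
  classical
  rw [binom, MvPolynomial.coeff_sub, MvPolynomial.coeff_monomial, MvPolynomial.coeff_monomial]

lemma support_binom {u v : σ →₀ ℕ} (h : u ≠ v) :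
    (binom K u v).support = {u, v} := by
  classical
  ext c
  rw [MvPolynomial.mem_support_iff, coeff_binom, Finset.mem_insert, Finset.mem_singleton]
  by_cases hu : u = c <;> by_cases hv : v = c <;> simp_all [sub_eq_zero, eq_comm]

lemma vars_binom {u v : σ →₀ ℕ} (h : u ≠ v) :
    (binom K u v).vars = u.support ∪ v.support := by
  classical
  ext i
  rw [MvPolynomial.mem_vars]
  simp [support_binom h, Finset.mem_union]

lemma span_binom_le {F : Set (MvPolynomial σ K)} (hF : ∀ g ∈ F, IsBinomial g)
    {p : MvPolynomial σ K} (hp : p ∈ Ideal.span F) (c : σ →₀ ℕ) :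
    ∀ c' : σ →₀ ℕ, (∀ j, c' j ≤ c j) → MvPolynomial.coeff c' p ≠ 0 →
      ∃ g ∈ F, ∃ u v : σ →₀ ℕ, u ≠ v ∧ g = binom K u v ∧
        ((∀ j, u j ≤ c j) ∨ (∀ j, v j ≤ c j)) := by
  classical
  refine Submodule.span_induction ?_ ?_ ?_ ?_ hp
  · intro g hg c' hc' hcoeff
    obtain ⟨u, v, huv, rfl⟩ := hF g hg
    refine ⟨_, hg, u, v, huv, rfl, ?_⟩
    rw [coeff_binom] at hcoeff
    rcases eq_or_ne u c' with rfl | hu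
    · exact Or.inl (fun j => le_trans (hc' j) le_rfl)
    rcases eq_or_ne v c' with rfl | hv
    · exact Or.inr (fun j => le_trans (hc' j) le_rfl)
    · simp [hu, hv] at hcoeff
  · intro c' _ hcoeff
    simp at hcoeff
  · intro x y _ _ hx hy c' hc' hcoeff
    rw [MvPolynomial.coeff_add] at hcoeff
    have hor : MvPolynomial.coeff c' x ≠ 0 ∨ MvPolynomial.coeff c' y ≠ 0 := by
      by_contra hcon
      push_neg at hcon
      rw [hcon.1, hcon.2, add_zero] at hcoeff
      exact hcoeff rfl
    rcases hor with h | h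
    · exact hx c' hc' h
    · exact hy c' hc' h
  · intro a x _ hx c' hc' hcoeff
    rw [smul_eq_mul, MvPolynomial.coeff_mul] at hcoeff
    obtain ⟨⟨d, e⟩, hmem, hne⟩ := Finset.exists_ne_zero_of_sum_ne_zero hcoeff
    rw [Finset.HasAntidiagonal.mem_antidiagonal] at hmem
    have he : MvPolynomial.coeff e x ≠ 0 := right_ne_zero_of_mul hne
    refine hx e (fun j => ?_) he
    calc e j ≤ d j + e j := Nat.le_add_left _ _
    _ = c' j := by rw [← Finsupp.add_apply, hmem]
    _ ≤ c j := hc' j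

end Aux4

section Aux5
variable {r : ℕ}

lemma pair_apply (a b j : Fin (r+1)) :
    (Finsupp.single a 1 + Finsupp.single b 1 : Fin (r+1) →₀ ℕ) j =
      (if a = j then 1 else 0) + (if b = j then 1 else 0) := by
  rw [Finsupp.add_apply, Finsupp.single_apply, Finsupp.single_apply]

end Aux5


/-- For `r ≥ 3`, the binomial `x_1 x_4 - x_2 x_3` (zero-indexed: `x_0 x_3 - x_1 x_2`)
belongs to the toric ideal of `V_2^{(r)}`, is not a circuit, is the unique binomial of
`I_A` with first monomial `x_1 x_4`, and is indispensable. -/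
theorem veronese_binomial_indispensable_not_circuit (r : ℕ) (hr : 3 ≤ r)
    (K : Type*) [Field K] (u₀ v₀ : Fin (r + 1) →₀ ℕ)
    (hu₀ : u₀ = Finsupp.single ⟨0, by omega⟩ 1 + Finsupp.single ⟨3, by omega⟩ 1)
    (hv₀ : v₀ = Finsupp.single ⟨1, by omega⟩ 1 + Finsupp.single ⟨2, by omega⟩ 1) :
    binom K u₀ v₀ ∈ toricIdeal K (V2config r) ∧
      ¬ IsCircuit (toricIdeal K (V2config r)) (binom K u₀ v₀) ∧
      (∀ w : Fin (r + 1) →₀ ℕ, w ≠ u₀ →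
        binom K u₀ w ∈ toricIdeal K (V2config r) → w = v₀) ∧
      (∀ F : Set (MvPolynomial (Fin (r + 1)) K), (∀ g ∈ F, IsBinomial g) →
        Ideal.span F = toricIdeal K (V2config r) →
        binom K u₀ v₀ ∈ F ∨ -(binom K u₀ v₀) ∈ F) := by
  have hrpos : 0 < r := by omega
  let j0 : Fin (r+1) := ⟨0, by omega⟩
  let j1 : Fin (r+1) := ⟨1, by omega⟩
  let j2 : Fin (r+1) := ⟨2, by omega⟩
  let j3 : Fin (r+1) := ⟨3, by omega⟩
  have v0 : (j0 : ℕ) = 0 := rfl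
  have v1 : (j1 : ℕ) = 1 := rfl
  have v2 : (j2 : ℕ) = 2 := rfl
  have v3 : (j3 : ℕ) = 3 := rfl
  have d01 : j0 ≠ j1 := Fin.ne_of_val_ne (by omega)
  have d02 : j0 ≠ j2 := Fin.ne_of_val_ne (by omega)
  have d03 : j0 ≠ j3 := Fin.ne_of_val_ne (by omega)
  have d12 : j1 ≠ j2 := Fin.ne_of_val_ne (by omega)
  have d13 : j1 ≠ j3 := Fin.ne_of_val_ne (by omega)
  have d23 : j2 ≠ j3 := Fin.ne_of_val_ne (by omega)
  have hu₀' : u₀ = Finsupp.single j0 1 + Finsupp.single j3 1 := hu₀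
  have hv₀' : v₀ = Finsupp.single j1 1 + Finsupp.single j2 1 := hv₀
  have hwtu : wtE u₀ = 2 := by rw [hu₀', wtE_add, wtE_single, wtE_single]
  have hdgu : dgE u₀ = 3 := by rw [hu₀', dgE_add, dgE_single, dgE_single, v0, v3]
  have hwtv : wtE v₀ = 2 := by rw [hv₀', wtE_add, wtE_single, wtE_single]
  have hdgv : dgE v₀ = 3 := by rw [hv₀', dgE_add, dgE_single, dgE_single, v1, v2]
  have hu₀app : ∀ j, u₀ j = (if j0 = j then 1 else 0) + (if j3 = j then 1 else 0) := by
    intro j; rw [hu₀']; exact pair_apply j0 j3 j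
  have hv₀app : ∀ j, v₀ j = (if j1 = j then 1 else 0) + (if j2 = j then 1 else 0) := by
    intro j; rw [hv₀']; exact pair_apply j1 j2 j
  have hne : u₀ ≠ v₀ := by
    intro h
    have := congrArg (fun w : Fin (r+1) →₀ ℕ => w j0) h
    simp only [hu₀app j0, hv₀app j0, if_pos rfl, if_neg (Ne.symm d03),
      if_neg (Ne.symm d01), if_neg (Ne.symm d02)] at this
    norm_num at this
  have hmemf : binom K u₀ v₀ ∈ toricIdeal K (V2config r) :=
    (binom_mem_iff hrpos u₀ v₀).mpr ⟨by rw [hwtu, hwtv], by rw [hdgu, hdgv]⟩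
  -- part 3 (uniqueness), proved first since used for part 4
  have part3 : ∀ w : Fin (r + 1) →₀ ℕ, w ≠ u₀ →
      binom K u₀ w ∈ toricIdeal K (V2config r) → w = v₀ := by
    intro w hw hmem
    obtain ⟨hwt, hdg⟩ := (binom_mem_iff hrpos u₀ w).mp hmem
    rcases key2 hr w (by rw [← hwt, hwtu]) (by rw [← hdg, hdgu]) with h | h
    · exact absurd (by rw [hu₀]; exact h) hw
    · rw [hv₀]; exact h
  -- main structural lemma for part 4
  have hmain : ∀ u v : Fin (r+1) →₀ ℕ, u ≠ v →
      binom K u v ∈ toricIdeal K (V2config r) → (∀ j, u j ≤ u₀ j) →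
      u = u₀ ∧ v = v₀ := by
    intro u v huv hmem hle
    have uother : ∀ j, j ≠ j0 → j ≠ j3 → u j = 0 := by
      intro j h0 h3
      have := hle j
      rw [hu₀app j, if_neg (fun h => h0 h.symm), if_neg (fun h => h3 h.symm)] at this
      omega
    have hu0le : u j0 ≤ 1 := by
      have := hle j0
      rw [hu₀app j0, if_pos rfl, if_neg (Ne.symm d03)] at this
      omega
    have hu3le : u j3 ≤ 1 := by
      have := hle j3
      rw [hu₀app j3, if_neg d03, if_pos rfl] at this
      omega
    have hsum2 : ∀ f : Fin (r+1) → ℕ, (∀ j, j ≠ j0 → j ≠ j3 → f j = 0) →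
        ∑ j, f j = f j0 + f j3 := by
      intro f hf
      rw [← Finset.sum_subset (Finset.subset_univ ({j0, j3} : Finset (Fin (r+1))))
        (fun j _ hj => by
          simp only [Finset.mem_insert, Finset.mem_singleton] at hj
          push_neg at hj
          exact hf j hj.1 hj.2)]
      rw [Finset.sum_pair d03]
    have hwtu' : wtE u = u j0 + u j3 := hsum2 (fun j => u j) (fun j a b => uother j a b)
    have hdgu' : dgE u = u j3 * 3 := by
      have := hsum2 (fun j => u j * (j : ℕ))
        (fun j a b => by show u j * (j:ℕ) = 0; rw [uother j a b, zero_mul])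
      rw [dgE, this]
      simp only [v0, v3]
      omega
    obtain ⟨hwteq, hdgeq⟩ := (binom_mem_iff hrpos u v).mp hmem
    have hc0 : u j0 = 0 ∨ u j0 = 1 := by omega
    have hc3 : u j3 = 0 ∨ u j3 = 1 := by omega
    rcases hc0 with a0 | a0 <;> rcases hc3 with a3 | a3
    · -- u = 0
      exfalso
      have hu' : u = 0 := by
        ext j
        by_cases h0 : j = j0
        · rw [h0, a0]; rfl
        by_cases h3 : j = j3
        · rw [h3, a3]; rfl
        · rw [uother j h0 h3]; rfl
      have : v = 0 := wt0 v (by rw [← hwteq, hwtu', a0, a3])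
      exact huv (by rw [hu', this])
    · -- u = single j3 1
      exfalso
      obtain ⟨j, hvj, hzero, hdgv'⟩ := wt1 v (by rw [← hwteq, hwtu', a0, a3])
      have hj : j = j3 := Fin.ext (by rw [← hdgv', ← hdgeq, hdgu', a3, one_mul, v3])
      subst hj
      apply huv
      ext k
      by_cases hk : k = j3
      · rw [hk, a3, hvj]
      · rw [hzero k hk]
        by_cases hk0 : k = j0
        · rw [hk0, a0]
        · exact uother k hk0 hk
    · -- u = single j0 1
      exfalso
      obtain ⟨j, hvj, hzero, hdgv'⟩ := wt1 v (by rw [← hwteq, hwtu', a0, a3])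
      have hj : j = j0 := Fin.ext (by rw [← hdgv', ← hdgeq, hdgu', a3, zero_mul, v0])
      subst hj
      apply huv
      ext k
      by_cases hk : k = j0
      · rw [hk, a0, hvj]
      · rw [hzero k hk]
        by_cases hk3 : k = j3
        · rw [hk3, a3]
        · exact uother k hk hk3
    · -- u = u₀
      have hueq : u = u₀ := by
        ext j
        rw [hu₀app j]
        by_cases h0 : j = j0
        · rw [h0, if_pos rfl, if_neg (Ne.symm d03), a0]
        by_cases h3 : j = j3
        · rw [h3, if_neg d03, if_pos rfl, a3]
        · rw [if_neg (fun h => h0 h.symm), if_neg (fun h => h3 h.symm), uother j h0 h3]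
      refine ⟨hueq, ?_⟩
      apply part3 v (fun h => huv (by rw [hueq, h]))
      rw [← hueq]
      exact hmem
  refine ⟨hmemf, ?_, part3, ?_⟩
  · -- not a circuit
    rintro ⟨-, -, -, hmin⟩
    set u₁ : Fin (r+1) →₀ ℕ := Finsupp.single j0 1 + Finsupp.single j2 1 with hu₁
    set v₁ : Fin (r+1) →₀ ℕ := Finsupp.single j1 2 with hv₁
    have hne₁ : u₁ ≠ v₁ := by
      intro h
      have := congrArg (fun w : Fin (r+1) →₀ ℕ => w j0) h
      simp only [hu₁, hv₁, pair_apply, Finsupp.single_apply, if_pos rfl,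
        if_neg (Ne.symm d02), if_neg (Ne.symm d01)] at this
      norm_num at this
    have hg : binom K u₁ v₁ ∈ toricIdeal K (V2config r) := by
      refine (binom_mem_iff hrpos u₁ v₁).mpr ⟨?_, ?_⟩
      · rw [hu₁, hv₁, wtE_add, wtE_single, wtE_single, wtE_single]
      · rw [hu₁, hv₁, dgE_add, dgE_single, dgE_single, dgE_single, v0, v1, v2]
    have hsupp1 : (Finsupp.single j0 (1:ℕ)).support = {j0} :=
      Finsupp.support_single_ne_zero _ one_ne_zero
    have hsupp3 : (Finsupp.single j3 (1:ℕ)).support = {j3} :=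
      Finsupp.support_single_ne_zero _ one_ne_zero
    have hsuppb : (Finsupp.single j1 (1:ℕ)).support = {j1} :=
      Finsupp.support_single_ne_zero _ one_ne_zero
    have hsuppc : (Finsupp.single j2 (1:ℕ)).support = {j2} :=
      Finsupp.support_single_ne_zero _ one_ne_zero
    have hsupp2 : (Finsupp.single j1 (2:ℕ)).support = {j1} :=
      Finsupp.support_single_ne_zero _ two_ne_zero
    have hvf : (binom K u₀ v₀).vars = ({j0} ∪ {j3}) ∪ ({j1} ∪ {j2}) := by
      rw [vars_binom hne, hu₀', hv₀',
        Finsupp.support_add_eq (by rw [hsupp1, hsupp3]; exact Finset.disjoint_singleton.mpr d03),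
        Finsupp.support_add_eq (by rw [hsuppb, hsuppc]; exact Finset.disjoint_singleton.mpr d12),
        hsupp1, hsupp3, hsuppb, hsuppc]
    have hvg : (binom K u₁ v₁).vars = ({j0} ∪ {j2}) ∪ {j1} := by
      rw [vars_binom hne₁, hu₁, hv₁,
        Finsupp.support_add_eq (by rw [hsupp1, hsuppc]; exact Finset.disjoint_singleton.mpr d02),
        hsupp1, hsuppc, hsupp2]
    refine hmin (binom K u₁ v₁) hg ⟨u₁, v₁, hne₁, rfl⟩ ?_
    rw [Finset.ssubset_def, hvf, hvg]
    constructor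
    · intro i hi
      simp only [Finset.mem_union, Finset.mem_singleton] at hi ⊢
      tauto
    · intro hsub
      have h3mem : j3 ∈ ({j0} ∪ {j3}) ∪ ({j1} ∪ {j2} : Finset (Fin (r+1))) := by
        simp [Finset.mem_union]
      have := hsub h3mem
      simp only [Finset.mem_union, Finset.mem_singleton] at this
      rcases this with (h | h) | h
      · exact d03 h.symm
      · exact d23 h.symm
      · exact d13 h.symm
  · -- indispensability
    intro F hFbin hFspan
    have hfspan : binom K u₀ v₀ ∈ Ideal.span F := by rw [hFspan]; exact hmemf
    have hcoeff : MvPolynomial.coeff u₀ (binom K u₀ v₀) ≠ 0 := by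
      rw [coeff_binom, if_pos rfl, if_neg (Ne.symm hne), sub_zero]
      exact one_ne_zero
    obtain ⟨g, hgF, u, v, huv, rfl, hle⟩ :=
      span_binom_le hFbin hfspan u₀ u₀ (fun j => le_rfl) hcoeff
    have hgI : binom K u v ∈ toricIdeal K (V2config r) := by
      rw [← hFspan]; exact Ideal.subset_span hgF
    rcases hle with h | h
    · obtain ⟨hueq, hveq⟩ := hmain u v huv hgI h
      left
      rw [← hueq, ← hveq]
      exact hgF
    · have hgI' : binom K v u ∈ toricIdeal K (V2config r) := by
        obtain ⟨h1, h2⟩ := (binom_mem_iff hrpos u v).mp hgI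
        exact (binom_mem_iff hrpos v u).mpr ⟨h1.symm, h2.symm⟩
      obtain ⟨hueq, hveq⟩ := hmain v u huv.symm hgI' h
      right
      have : -(binom K u₀ v₀) = binom K u v := by
        rw [← hueq, ← hveq]
        unfold binom
        rw [neg_sub]
      rw [this]
      exact hgF
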